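/- arXiv:2009.10246 — 4 statements merged into one kernel-verified Lean document; each statement's English description precedes it below -/
import Mathlib

section
/- Completeness of the general minimal-entailment calculus: for every finite-valued logic L with connectives 𝐈 and 𝐈̄ as described, every true ME-sequent Σ;Γ⇒Δ;Θ (with Σ, Θ finite sets of atoms and Γ, Δ finite theories) is derivable in the calculus ME^𝓘_L. -/
/-- A finite-valued propositional logic: a finite set of truth values with
distinguished values `t` and `f`, a set of designated values containing `t`
but not `f`, and a family of connectives with truth functions.  Atoms are
the natural numbers (a countably infinite set). -/
structure FVLogic where
  V : Type
  finV : Fintype V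
  desig : Set V
  t : V
  f : V
  t_mem : t ∈ desig
  f_not_mem : f ∉ desig
  Conn : Type
  arity : Conn → ℕ
  tf : (c : Conn) → (Fin (arity c) → V) → V

/-- Formulas of a finite-valued logic, built from atoms by applying connectives. -/
inductive FVLogic.Formula (L : FVLogic) : Type
  | atom : ℕ → FVLogic.Formula L
  | app : (c : L.Conn) → (Fin (L.arity c) → FVLogic.Formula L) → FVLogic.Formula L

namespace FVLogic

variable {L : FVLogic}

/-- The valuation extending an interpretation `I : ℕ → L.V` to all formulas. -/
def val (I : ℕ → L.V) : Formula L → L.V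
  | .atom p => I p
  | .app c args => L.tf c (fun i => val I (args i))

/-- `I` is a model of the formula `φ`. -/
def IsModel (I : ℕ → L.V) (φ : Formula L) : Prop := val I φ ∈ L.desig

/-- `I` is a model of the theory `Γ`. -/
def IsModelSet (I : ℕ → L.V) (Γ : Set (Formula L)) : Prop := ∀ φ ∈ Γ, IsModel I φ

/-- `Γ ⊨_L Δ`: every model of `Γ` is a model of some member of `Δ`. -/
def Entails (Γ Δ : Set (Formula L)) : Prop :=
  ∀ I, IsModelSet I Γ → ∃ δ ∈ Δ, IsModel I δ

/-- `J ≤^Θ I`: the atoms of `Θ` taking a value in `𝓘` under `J` are among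
those doing so under `I`. -/
def leI (𝓘 : Set L.V) (Θ : Set ℕ) (J I : ℕ → L.V) : Prop :=
  {p | p ∈ Θ ∧ J p ∈ 𝓘} ⊆ {p | p ∈ Θ ∧ I p ∈ 𝓘}

/-- `J <^Θ I`. -/
def ltI (𝓘 : Set L.V) (Θ : Set ℕ) (J I : ℕ → L.V) : Prop :=
  leI 𝓘 Θ J I ∧ ¬ leI 𝓘 Θ I J

/-- `I` is an `(𝓘;Θ)`-minimal model of `Γ`. -/
def IsMinModel (𝓘 : Set L.V) (Θ : Set ℕ) (Γ : Set (Formula L)) (I : ℕ → L.V) : Prop :=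
  IsModelSet I Γ ∧ ¬ ∃ J, IsModelSet J Γ ∧ ltI 𝓘 Θ J I

/-- Truth of the ME-sequent `Σ;Γ⇒Δ;Θ`: every `(𝓘;Θ∪Σ)`-minimal model `I` of `Γ`
with `v_I(q) ∈ 𝓘` for all `q ∈ Σ` is a model of some member of `Δ`. -/
def METrue (𝓘 : Set L.V) (S : Set ℕ) (Γ Δ : Set (Formula L)) (Θ : Set ℕ) : Prop :=
  ∀ I, IsMinModel 𝓘 (Θ ∪ S) Γ I → (∀ q ∈ S, I q ∈ 𝓘) → ∃ δ ∈ Δ, IsModel I δ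

/-- The connective `𝐈`: `v_I(𝐈φ) = t` if `v_I(φ) ∈ 𝓘`, and `= f` otherwise. -/
def IOpSpec (𝓘 : Set L.V) (opI : Formula L → Formula L) : Prop :=
  ∀ (I : ℕ → L.V) (φ : Formula L),
    (val I φ ∈ 𝓘 → val I (opI φ) = L.t) ∧ (val I φ ∉ 𝓘 → val I (opI φ) = L.f)

/-- The connective `𝐈̄`: `v_I(𝐈̄φ) = t` if `v_I(φ) ∉ 𝓘`, and `= f` otherwise. -/
def IBarOpSpec (𝓘 : Set L.V) (opIbar : Formula L → Formula L) : Prop :=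
  ∀ (I : ℕ → L.V) (φ : Formula L),
    (val I φ ∉ 𝓘 → val I (opIbar φ) = L.t) ∧ (val I φ ∈ 𝓘 → val I (opIbar φ) = L.f)

end FVLogic

open FVLogic in
/-- Derivability in the calculus `ME^𝓘_L`: the least set of ME-sequents
`Σ;Γ⇒Δ;Θ` closed under the rules (m1), (m2) and (m3), where the premisses of
(m1) and (m2) are stated semantically (using the adequacy of the underlying
sequent calculus `S_L` and anti-sequent calculus `R_L`). -/
inductive MEDeriv (L : FVLogic) (𝓘 : Set L.V) (opI opIbar : FVLogic.Formula L → FVLogic.Formula L) :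
    Set ℕ → Set (FVLogic.Formula L) → Set (FVLogic.Formula L) → Set ℕ → Prop
  | m1 {S Θ : Set ℕ} {Γ Δ : Set (Formula L)} {q : ℕ} :
      ¬ Entails (Γ ∪ (fun p => opIbar (Formula.atom p)) '' Θ) {opI (Formula.atom q)} →
      MEDeriv L 𝓘 opI opIbar (insert q S) Γ Δ Θ
  | m2 {S Θ : Set ℕ} {Γ Δ : Set (Formula L)} :
      Entails ((fun p => opI (Formula.atom p)) '' S ∪ Γ) Δ →
      MEDeriv L 𝓘 opI opIbar S Γ Δ Θ
  | m3 {S Θ : Set ℕ} {Γ Δ : Set (Formula L)} {q : ℕ} :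
      MEDeriv L 𝓘 opI opIbar (insert q S) Γ Δ Θ →
      MEDeriv L 𝓘 opI opIbar S (insert (opIbar (Formula.atom q)) Γ) Δ Θ →
      MEDeriv L 𝓘 opI opIbar S Γ Δ (insert q Θ)


open FVLogic in
private lemma opI_model_iff {L : FVLogic} {𝓘 : Set L.V} {opI : Formula L → Formula L}
    (hI : IOpSpec 𝓘 opI) (I : ℕ → L.V) (q : ℕ) :
    IsModel I (opI (Formula.atom q)) ↔ I q ∈ 𝓘 := by
  constructor
  · intro h
    by_contra hn
    have hf := (hI I (Formula.atom q)).2 hn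
    rw [IsModel, hf] at h
    exact L.f_not_mem h
  · intro h
    have ht := (hI I (Formula.atom q)).1 h
    rw [IsModel, ht]
    exact L.t_mem

open FVLogic in
private lemma opIbar_model_iff {L : FVLogic} {𝓘 : Set L.V} {opIbar : Formula L → Formula L}
    (hIbar : IBarOpSpec 𝓘 opIbar) (I : ℕ → L.V) (q : ℕ) :
    IsModel I (opIbar (Formula.atom q)) ↔ I q ∉ 𝓘 := by
  constructor
  · intro h hn
    have hf := (hIbar I (Formula.atom q)).2 hn
    rw [IsModel, hf] at h
    exact L.f_not_mem h
  · intro h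
    have ht := (hIbar I (Formula.atom q)).1 h
    rw [IsModel, ht]
    exact L.t_mem

open FVLogic in
/-- Completeness of the general minimal-entailment calculus `ME^𝓘_L`: every
true ME-sequent `Σ;Γ⇒Δ;Θ` (with `Σ`, `Θ` finite sets of atoms and `Γ`, `Δ`
finite theories) is derivable. -/
theorem MEDeriv.completeness (L : FVLogic) (𝓘 : Set L.V)
    (opI opIbar : FVLogic.Formula L → FVLogic.Formula L)
    (hI : IOpSpec 𝓘 opI) (hIbar : IBarOpSpec 𝓘 opIbar)
    (S Θ : Set ℕ) (Γ Δ : Set (FVLogic.Formula L))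
    (hS : S.Finite) (hΘ : Θ.Finite) (hΓ : Γ.Finite) (hΔ : Δ.Finite)
    (htrue : METrue 𝓘 S Γ Δ Θ) :
    MEDeriv L 𝓘 opI opIbar S Γ Δ Θ := by
  classical
  clear hS hΓ hΔ
  revert S Γ
  refine Set.Finite.induction_on
    (motive := fun Θ _ => ∀ S Γ, METrue 𝓘 S Γ Δ Θ → MEDeriv L 𝓘 opI opIbar S Γ Δ Θ)
    Θ hΘ ?_ ?_
  · intro S Γ htrue
    by_cases h : ∀ q ∈ S,
        Entails (Γ ∪ (fun p => opIbar (Formula.atom p)) '' (∅ : Set ℕ)) {opI (Formula.atom q)}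
    · apply MEDeriv.m2
      intro I hmod
      have hΓmod : IsModelSet I Γ := fun φ hφ => hmod φ (Or.inr hφ)
      have hS𝓘 : ∀ q ∈ S, I q ∈ 𝓘 := by
        intro q hq
        exact (opI_model_iff hI I q).mp (hmod _ (Or.inl ⟨q, hq, rfl⟩))
      have hmin : IsMinModel 𝓘 ((∅ : Set ℕ) ∪ S) Γ I := by
        refine ⟨hΓmod, ?_⟩
        rintro ⟨J, hJΓ, hle, hnle⟩
        apply hnle
        rintro p ⟨hp, hIp⟩
        have hpS : p ∈ S := by simpa using hp
        have hJmod : IsModelSet J (Γ ∪ (fun p => opIbar (Formula.atom p)) '' (∅ : Set ℕ)) := by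
          rintro φ (hφ | ⟨x, hx, rfl⟩)
          · exact hJΓ φ hφ
          · exact absurd hx (Set.notMem_empty x)
        obtain ⟨δ, hδ, hmδ⟩ := h p hpS J hJmod
        rw [Set.mem_singleton_iff] at hδ
        subst hδ
        exact ⟨hp, (opI_model_iff hI J p).mp hmδ⟩
      exact htrue I hmin hS𝓘
    · push_neg at h
      obtain ⟨q, hq, hne⟩ := h
      have := MEDeriv.m1 (L := L) (𝓘 := 𝓘) (S := S) (Δ := Δ) hne
      rwa [Set.insert_eq_self.mpr hq] at this
  · intro a s ha hs IH S Γ htrue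
    apply MEDeriv.m3
    · apply IH
      intro I hmin hSmem
      have hset : s ∪ insert a S = insert a s ∪ S := by
        rw [Set.union_insert, Set.insert_union]
      rw [hset] at hmin
      exact htrue I hmin (fun q hq => hSmem q (Set.mem_insert_of_mem a hq))
    · apply IH
      intro I hmin hSmem
      have hIa : I a ∉ 𝓘 :=
        (opIbar_model_iff hIbar I a).mp (hmin.1 _ (Set.mem_insert _ _))
      have hΓmod : IsModelSet I Γ := fun φ hφ => hmin.1 φ (Set.mem_insert_of_mem _ hφ)
      have hmin' : IsMinModel 𝓘 (insert a s ∪ S) Γ I := by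
        refine ⟨hΓmod, ?_⟩
        rintro ⟨J, hJΓ, hle, hnle⟩
        have hJa : J a ∉ 𝓘 := by
          intro hJa
          exact hIa (hle ⟨Or.inl (Set.mem_insert _ _), hJa⟩).2
        have hJmod : IsModelSet J (insert (opIbar (Formula.atom a)) Γ) := by
          rintro φ (rfl | hφ)
          · exact (opIbar_model_iff hIbar J a).mpr hJa
          · exact hJΓ φ hφ
        apply hmin.2
        refine ⟨J, hJmod, ?_, ?_⟩
        · rintro p ⟨hp, hJp⟩
          have hp' : p ∈ insert a s ∪ S := by
            rcases hp with hps | hpS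
            · exact Or.inl (Set.mem_insert_of_mem a hps)
            · exact Or.inr hpS
          exact ⟨hp, (hle ⟨hp', hJp⟩).2⟩
        · intro hIleJ
          apply hnle
          rintro p ⟨hp, hIp⟩
          have hp' : p ∈ s ∪ S := by
            rcases hp with hps | hpS
            · rcases Set.mem_insert_iff.mp hps with rfl | hps'
              · exact absurd hIp hIa
              · exact Or.inl hps'
            · exact Or.inr hpS
          have := hIleJ ⟨hp', hIp⟩
          rcases hp' with hps | hpS
          · exact ⟨Or.inl (Set.mem_insert_of_mem a hps), this.2⟩
          · exact ⟨Or.inr hpS, this.2⟩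
      exact htrue I hmin' hSmem
end

section
/- Connection between minimal entailment and ME-sequents: for any finite-valued logic L, set 𝓘 ⊆ V of truth values, and theories Γ and Δ, one has Γ ⊨^𝓘_L Δ if and only if the ME-sequent ∅;Γ⇒Δ;Var(Γ∪Δ) is true, where Var(Γ∪Δ) is the set of all propositional atoms occurring in formulas of Γ or Δ. -/
namespace FVLogic

variable {L : FVLogic}

/-- `I` is an `𝓘`-minimal model of `Γ`, i.e. `(𝓘;A)`-minimal where `A` is the
set of all atoms. -/
def IsMinModelUniv (𝓘 : Set L.V) (Γ : Set (Formula L)) (I : ℕ → L.V) : Prop :=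
  IsMinModel 𝓘 Set.univ Γ I

/-- `Γ ⊨^𝓘_L Δ`: every `𝓘`-minimal model of `Γ` is a model of some member of `Δ`. -/
def MinEntails (𝓘 : Set L.V) (Γ Δ : Set (Formula L)) : Prop :=
  ∀ I, IsMinModelUniv 𝓘 Γ I → ∃ δ ∈ Δ, IsModel I δ

/-- The set of atoms occurring in a formula. -/
def Formula.vars : Formula L → Set ℕ
  | .atom p => {p}
  | .app _ args => ⋃ i, (args i).vars

/-- The set of atoms occurring in a theory. -/
def vars (Γ : Set (Formula L)) : Set ℕ := ⋃ φ ∈ Γ, φ.vars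

end FVLogic

namespace FVLogic

variable {L : FVLogic}

lemma val_eq_of_agree {I J : ℕ → L.V} : ∀ φ : Formula L,
    (∀ p ∈ φ.vars, I p = J p) → val I φ = val J φ
  | .atom p, h => h p (by simp [Formula.vars])
  | .app c args, h => by
      simp only [val]
      congr 1
      funext i
      exact val_eq_of_agree (args i) fun p hp =>
        h p (Set.mem_iUnion.mpr ⟨i, hp⟩)

lemma isModel_congr {I J : ℕ → L.V} {φ : Formula L}
    (h : ∀ p ∈ φ.vars, I p = J p) : IsModel I φ ↔ IsModel J φ := by
  unfold IsModel
  rw [val_eq_of_agree φ h]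

end FVLogic

open FVLogic in
/-- Connection between minimal entailment and ME-sequents: `Γ ⊨^𝓘_L Δ` iff the
ME-sequent `∅;Γ⇒Δ;Var(Γ∪Δ)` is true. -/
theorem minEntails_iff_meTrue (L : FVLogic) (𝓘 : Set L.V)
    (Γ Δ : Set (FVLogic.Formula L)) :
    MinEntails 𝓘 Γ Δ ↔ METrue 𝓘 (∅ : Set ℕ) Γ Δ (FVLogic.vars (Γ ∪ Δ)) := by
  classical
  set Θ : Set ℕ := FVLogic.vars (Γ ∪ Δ) with hΘ
  have hΓΘ : ∀ φ ∈ Γ, φ.vars ⊆ Θ := fun φ hφ =>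
    Set.subset_biUnion_of_mem (Set.mem_union_left _ hφ)
  have hΔΘ : ∀ φ ∈ Δ, φ.vars ⊆ Θ := fun φ hφ =>
    Set.subset_biUnion_of_mem (Set.mem_union_right _ hφ)
  constructor
  · -- MinEntails → METrue
    intro hME I hmin _
    -- build I' agreeing with I on Θ, and with a non-𝓘 value (if any) off Θ
    set w : L.V := if h : ∃ v : L.V, v ∉ 𝓘 then h.choose else L.t with hw
    set I' : ℕ → L.V := fun p => if p ∈ Θ then I p else w with hI'
    have hagree : ∀ φ ∈ Γ ∪ Δ, ∀ p ∈ φ.vars, I p = I' p := by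
      intro φ hφ p hp
      have : p ∈ Θ := Set.subset_biUnion_of_mem hφ hp
      simp [hI', this]
    have hI'mod : IsModelSet I' Γ := by
      intro φ hφ
      exact (isModel_congr (fun p hp => hagree φ (Set.mem_union_left _ hφ) p hp)).mp
        (hmin.1 φ hφ)
    have hI'min : IsMinModelUniv 𝓘 Γ I' := by
      refine ⟨hI'mod, ?_⟩
      rintro ⟨J, hJmod, hJle, hJnle⟩
      apply hmin.2
      refine ⟨J, hJmod, ?_, ?_⟩
      · -- leI on Θ∪∅
        intro p hp
        rcases hp with ⟨hpΘ, hpI⟩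
        have hpΘ' : p ∈ Θ := by simpa using hpΘ
        have := hJle (show p ∈ {q | q ∈ Set.univ ∧ J q ∈ 𝓘} from ⟨trivial, hpI⟩)
        refine ⟨hpΘ, ?_⟩
        have hI'p : I' p ∈ 𝓘 := this.2
        simpa [hI', hpΘ'] using hI'p
      · -- not leI the other way
        intro hc
        apply hJnle
        intro p hp
        rcases hp with ⟨_, hpI'⟩
        refine ⟨trivial, ?_⟩
        by_cases hpΘ : p ∈ Θ
        · have : I p ∈ 𝓘 := by simpa [hI', hpΘ] using hpI'
          exact (hc (show p ∈ {q | q ∈ Θ ∪ ∅ ∧ I q ∈ 𝓘} from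
            ⟨by simpa using hpΘ, this⟩)).2
        · have hwI : w ∈ 𝓘 := by simpa [hI', hpΘ] using hpI'
          by_cases h : ∃ v : L.V, v ∉ 𝓘
          · exact absurd hwI (by simpa [hw, h] using h.choose_spec)
          · push_neg at h; exact h _
    obtain ⟨δ, hδ, hδmod⟩ := hME I' hI'min
    exact ⟨δ, hδ, (isModel_congr
      (fun p hp => hagree δ (Set.mem_union_right _ hδ) p hp)).mpr hδmod⟩
  · -- METrue → MinEntails
    intro hMT I hmin
    apply hMT I _ (by simp)
    refine ⟨hmin.1, ?_⟩
    rintro ⟨J, hJmod, hJle, hJnle⟩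
    -- build J' = J on Θ, I off Θ
    set J' : ℕ → L.V := fun p => if p ∈ Θ then J p else I p with hJ'
    have hagreeJ : ∀ φ ∈ Γ, ∀ p ∈ φ.vars, J p = J' p := by
      intro φ hφ p hp
      have : p ∈ Θ := hΓΘ φ hφ hp
      simp [hJ', this]
    have hJ'mod : IsModelSet J' Γ := fun φ hφ =>
      (isModel_congr (fun p hp => hagreeJ φ hφ p hp)).mp (hJmod φ hφ)
    apply hmin.2
    refine ⟨J', hJ'mod, ?_, ?_⟩
    · intro p hp
      rcases hp with ⟨_, hpJ'⟩
      refine ⟨trivial, ?_⟩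
      by_cases hpΘ : p ∈ Θ
      · have hJp : J p ∈ 𝓘 := by simpa [hJ', hpΘ] using hpJ'
        exact (hJle (show p ∈ {q | q ∈ Θ ∪ ∅ ∧ J q ∈ 𝓘} from
          ⟨by simpa using hpΘ, hJp⟩)).2
      · simpa [hJ', hpΘ] using hpJ'
    · intro hc
      apply hJnle
      intro p hp
      rcases hp with ⟨hpΘ, hpI⟩
      have hpΘ' : p ∈ Θ := by simpa using hpΘ
      have := hc (show p ∈ {q | q ∈ Set.univ ∧ I q ∈ 𝓘} from ⟨trivial, hpI⟩)
      refine ⟨hpΘ, ?_⟩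
      have : J' p ∈ 𝓘 := this.2
      simpa [hJ', hpΘ'] using this
end

section
/- Semantic correctness of rule (m1): for any finite-valued logic L, set 𝓘 ⊆ V, sets of atoms Σ and Θ, atom q, and theories Γ and Δ, if there exists a model J of Γ such that v_J(p) ∉ 𝓘 for every p ∈ Θ and v_J(q) ∉ 𝓘, then the ME-sequent q,Σ;Γ⇒Δ;Θ is true. -/
open FVLogic in
/-- Semantic correctness of rule (m1): if there exists a model `J` of `Γ` such
that `v_J(p) ∉ 𝓘` for every `p ∈ Θ` and `v_J(q) ∉ 𝓘`, then the ME-sequent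
`q,Σ;Γ⇒Δ;Θ` is true. -/
theorem m1_correct (L : FVLogic) (𝓘 : Set L.V) (S Θ : Set ℕ) (q : ℕ)
    (Γ Δ : Set (FVLogic.Formula L))
    (h : ∃ J : ℕ → L.V, IsModelSet J Γ ∧ (∀ p ∈ Θ, J p ∉ 𝓘) ∧ J q ∉ 𝓘) :
    METrue 𝓘 (insert q S) Γ Δ Θ := by
  intro I hmin hS
  exfalso
  obtain ⟨J, hJmod, hJΘ, hJq⟩ := h
  apply hmin.2
  refine ⟨J, hJmod, ?_, ?_⟩
  · intro p hp
    obtain ⟨hpmem, hpI⟩ := hp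
    refine ⟨hpmem, ?_⟩
    rcases hpmem with hΘ | hs
    · exact absurd hpI (hJΘ p hΘ)
    · exact hS p hs
  · intro hle
    have : q ∈ {p | p ∈ Θ ∪ insert q S ∧ J p ∈ 𝓘} :=
      hle ⟨Or.inr (Set.mem_insert q S), hS q (Set.mem_insert q S)⟩
    exact hJq this.2
end

section
/- Induction step of the completeness proof: for any finite-valued logic L, set 𝓘 ⊆ V, sets of atoms Σ and Θ, atom q ∉ Θ, and theories Γ and Δ, if the ME-sequent Σ;Γ⇒Δ;Θ∪{q} is true, then (a) the ME-sequent q,Σ;Γ⇒Δ;Θ is true, and (b) every (𝓘;Θ∪Σ)-minimal model I of Γ with v_I(q) ∉ 𝓘 and v_I(p) ∈ 𝓘 for all p ∈ Σ is a model of some δ ∈ Δ. -/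
open FVLogic in
/-- Induction step of the completeness proof: if `q ∉ Θ` and the ME-sequent
`Σ;Γ⇒Δ;Θ∪{q}` is true, then (a) the ME-sequent `q,Σ;Γ⇒Δ;Θ` is true, and
(b) every `(𝓘;Θ∪Σ)`-minimal model `I` of `Γ` with `v_I(q) ∉ 𝓘` and
`v_I(p) ∈ 𝓘` for all `p ∈ Σ` is a model of some member of `Δ`. -/
theorem completeness_induction_step (L : FVLogic) (𝓘 : Set L.V) (S Θ : Set ℕ) (q : ℕ)
    (hq : q ∉ Θ) (Γ Δ : Set (FVLogic.Formula L))
    (h : METrue 𝓘 S Γ Δ (insert q Θ)) :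
    METrue 𝓘 (insert q S) Γ Δ Θ ∧
      (∀ I : ℕ → L.V, IsMinModel 𝓘 (Θ ∪ S) Γ I → I q ∉ 𝓘 → (∀ p ∈ S, I p ∈ 𝓘) →
        ∃ δ ∈ Δ, IsModel I δ) := by
  have hset : (Θ ∪ insert q S : Set ℕ) = insert q Θ ∪ S := by
    ext p; simp [Set.mem_insert_iff, Set.mem_union]; tauto
  constructor
  · intro I hmin hS
    apply h I (by rwa [← hset]) (fun p hp => hS p (Set.mem_insert_of_mem q hp))
  · intro I hmin hIq hS
    apply h I _ hS
    constructor
    · exact hmin.1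
    · rintro ⟨J, hJmod, hJle, hJnle⟩
      have hJq : J q ∉ 𝓘 := by
        intro hJq
        exact hIq (hJle ⟨Set.mem_union_left _ (Set.mem_insert q Θ), hJq⟩).2
      apply hmin.2
      refine ⟨J, hJmod, ?_, ?_⟩
      · intro p hp
        have hp' : p ∈ insert q Θ ∪ S := by
          rcases hp.1 with h1 | h1
          · exact Set.mem_union_left _ (Set.mem_insert_of_mem q h1)
          · exact Set.mem_union_right _ h1
        exact ⟨hp.1, (hJle ⟨hp', hp.2⟩).2⟩
      · intro hle
        apply hJnle
        intro p hp
        rcases hp.1 with h1 | h1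
        · rcases h1 with rfl | h1
          · exact absurd hp.2 hIq
          · exact ⟨hp.1, (hle ⟨Set.mem_union_left _ h1, hp.2⟩).2⟩
        · exact ⟨hp.1, (hle ⟨Set.mem_union_right _ h1, hp.2⟩).2⟩
end
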